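/- Let p be an odd prime, e ≥ 1, n a positive integer, and x an element of Z/p^e Z (or more generally a commutative ring) of the form α = β + p·x where β is a unit. If Σ_{i=1}^{n} C(n,i)·(p x)^{i-1}·β^{n-i} ≡ 0 (mod p^s) for some s ≥ 1, then p^s divides n. (Inductive step: if p^k | n for k < s, then the sum is congruent to n·β^{n-1} mod p^{k+1}, hence p^{k+1} | n.) -/

import Mathlib

private lemma aux_lt_pow (p : ℕ) (hp : 3 ≤ p) : ∀ i, 2 ≤ i → i < p ^ (i - 1) := by
  intro i
  induction i with
  | zero => omega
  | succ m ih =>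
    intro _
    rcases Nat.lt_or_ge m 2 with h | h
    · interval_cases m
      · omega
      · simpa using by omega
    · have h1 := ih h
      have h2 : m + 1 - 1 = (m - 1) + 1 := by omega
      rw [h2, pow_succ]
      have : p ^ (m - 1) * 3 ≤ p ^ (m - 1) * p := Nat.mul_le_mul_left _ hp
      omega

private lemma aux_val_le (p : ℕ) (hp : p.Prime) (hp3 : 3 ≤ p) (i : ℕ) (hi : 2 ≤ i) :
    i.factorization p ≤ i - 2 := by
  by_contra hcon
  push_neg at hcon
  have h1 : p ^ (i - 1) ∣ i := by
    refine dvd_trans (pow_dvd_pow p (by omega)) (Nat.ordProj_dvd i p)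
  have h2 := Nat.le_of_dvd (by omega) h1
  have := aux_lt_pow p hp3 i hi
  omega

private lemma aux_dvd (p : ℕ) (hp : p.Prime) (hp3 : 3 ≤ p) (k n i : ℕ)
    (hn : 1 ≤ n) (hi : 2 ≤ i) (hin : i ≤ n) (hk : p ^ k ∣ n) :
    p ^ (k + 1) ∣ n.choose i * p ^ (i - 1) := by
  have hc : 0 < n.choose i := Nat.choose_pos hin
  -- n * C(n-1, i-1) = C(n,i) * i
  have key : n * (n - 1).choose (i - 1) = n.choose i * i := by
    have := Nat.add_one_mul_choose_eq (n - 1) (i - 1)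
    have e1 : n - 1 + 1 = n := by omega
    have e2 : i - 1 + 1 = i := by omega
    rwa [e1, e2] at this
  have hdvd : p ^ k ∣ n.choose i * i := key ▸ Dvd.dvd.mul_right hk _
  have hne : n.choose i * i ≠ 0 := by positivity
  have hle : k ≤ (n.choose i * i).factorization p :=
    (Nat.Prime.pow_dvd_iff_le_factorization hp hne).mp hdvd
  rw [Nat.factorization_mul (by omega) (by omega)] at hle
  simp only [Finsupp.add_apply] at hle
  have hvi := aux_val_le p hp hp3 i hi
  have hvc : p ^ ((n.choose i).factorization p) ∣ n.choose i := Nat.ordProj_dvd _ p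
  calc p ^ (k + 1) ∣ p ^ ((n.choose i).factorization p + (i - 1)) :=
        pow_dvd_pow p (by omega)
    _ ∣ n.choose i * p ^ (i - 1) := by
        rw [pow_add]; exact mul_dvd_mul hvc dvd_rfl

/-- If `β` is a unit mod `p^s` and
`Σ_{i=1}^{n} C(n,i)·(p x)^{i-1}·β^{n-i} ≡ 0 (mod p^s)`, then `p^s ∣ n`. -/
theorem stmt16 (p : ℕ) (hp : p.Prime) (hp2 : p ≠ 2) (s : ℕ) (hs : 1 ≤ s)
    (x β : ZMod (p ^ s)) (hβ : IsUnit β) (n : ℕ)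
    (h : ∑ i ∈ Finset.Icc 1 n,
        (n.choose i : ZMod (p ^ s)) * ((p : ZMod (p ^ s)) * x) ^ (i - 1)
          * β ^ (n - i) = 0) :
    p ^ s ∣ n := by
  rcases Nat.eq_zero_or_pos n with rfl | hn
  · exact dvd_zero _
  have hp3 : 3 ≤ p := by have := hp.two_le; omega
  suffices H : ∀ k, k ≤ s → p ^ k ∣ n from H s le_rfl
  intro k
  induction k with
  | zero => intro _; simpa using one_dvd n
  | succ k ih =>
    intro hks
    have hk : p ^ k ∣ n := ih (by omega)
    -- move to ZMod (p ^ (k+1))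
    have hdvd : p ^ (k + 1) ∣ p ^ s := pow_dvd_pow p hks
    let f : ZMod (p ^ s) →+* ZMod (p ^ (k + 1)) := ZMod.castHom hdvd _
    have h2 : ∑ i ∈ Finset.Icc 1 n,
        (n.choose i : ZMod (p ^ (k + 1))) * ((p : ZMod (p ^ (k + 1))) * f x) ^ (i - 1)
          * (f β) ^ (n - i) = 0 := by
      have := congrArg f h
      simpa [map_sum, map_mul, map_pow] using this
    have h3 : (n : ZMod (p ^ (k + 1))) * (f β) ^ (n - 1) = 0 := by
      have h5 : ∑ i ∈ Finset.Icc 1 n,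
          (n.choose i : ZMod (p ^ (k + 1))) * ((p : ZMod (p ^ (k + 1))) * f x) ^ (i - 1)
            * (f β) ^ (n - i)
          = (n.choose 1 : ZMod (p ^ (k + 1))) * ((p : ZMod (p ^ (k + 1))) * f x) ^ (1 - 1)
            * (f β) ^ (n - 1) := by
        apply Finset.sum_eq_single_of_mem 1 (Finset.mem_Icc.mpr ⟨le_rfl, hn⟩)
        intro i hi hi1
        rw [Finset.mem_Icc] at hi
        have hi2 : 2 ≤ i := by omega
        have := aux_dvd p hp hp3 k n i hn hi2 hi.2 hk
        have hz : ((n.choose i * p ^ (i - 1) : ℕ) : ZMod (p ^ (k + 1))) = 0 :=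
          (ZMod.natCast_eq_zero_iff _ _).mpr this
        push_cast at hz
        have heq : (n.choose i : ZMod (p ^ (k + 1)))
              * ((p : ZMod (p ^ (k + 1))) * f x) ^ (i - 1) * (f β) ^ (n - i)
            = ((n.choose i : ZMod (p ^ (k + 1))) * (p : ZMod (p ^ (k + 1))) ^ (i - 1))
              * ((f x) ^ (i - 1) * (f β) ^ (n - i)) := by
          rw [mul_pow]; ring
        rw [heq, hz, zero_mul]
      rw [h5] at h2
      simpa using h2
    have hβ' : IsUnit ((f β) ^ (n - 1)) := (hβ.map f).pow _
    have h4 : (n : ZMod (p ^ (k + 1))) = 0 := by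
      have := hβ'.mul_left_eq_zero.mp h3
      exact this
    exact (ZMod.natCast_eq_zero_iff _ _).mp h4
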